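/- Let n ≥ 2 and x ∈ (0, 1/4). The extinction probability of a Galton–Watson branching process with offspring distribution Bin(n, 1-x) is strictly less than 2x^n. -/

import Mathlib

lemma ext_aux_nat (m : ℕ) (hm : 1 ≤ m) : 4 * (m + 2) ≤ 4 ^ (m + 1) := by
  induction m with
  | zero => omega
  | succ k ih =>
    rcases Nat.eq_zero_or_pos k with h | h
    · subst h; norm_num
    · have h1 := ih h
      have h2 : 4 ^ (k + 2) = 4 * 4 ^ (k + 1) := by ring
      omega

/-- The extinction probability of a Galton–Watson branching process with offspring
distribution `Bin(n, 1-x)` — which, by the standard fixed-point characterisation, is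
the smallest non-negative fixed point of its probability generating function
`G(z) = (x + (1-x)z)^n` — is strictly less than `2x^n` whenever `x ∈ (0, 1/4)` and
`n ≥ 2`. -/
theorem extinction_prob_binomial_lt (n : ℕ) (hn : 2 ≤ n)
    (x : ℝ) (hx0 : 0 < x) (hx1 : x < 1/4) :
    sInf {z : ℝ | 0 ≤ z ∧ (x + (1 - x) * z) ^ n = z} < 2 * x ^ n := by
  have hx1' : x < 1 := by linarith
  obtain ⟨m, rfl⟩ : ∃ m, n = m + 2 := ⟨n - 2, by omega⟩
  set t : ℝ := 2 * x ^ (m + 1) * (1 - x) with htdef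
  have hxm : 0 < x ^ (m + 1) := pow_pos hx0 (m + 1)
  have ht0 : 0 ≤ t := by
    apply mul_nonneg (by positivity) (by linarith)
  -- Key inequality: (1+t)^(m+2) < 2
  have hkey2 : (1 + t) ^ (m + 2) < 2 := by
    rcases Nat.eq_zero_or_pos m with hm | hm
    · subst hm
      have ht : t = 2 * x * (1 - x) := by rw [htdef]; ring
      rw [ht, show 0 + 2 = 2 from rfl]
      have h14 : 0 < 1/4 - x := by linarith
      nlinarith [mul_pos hx0 h14, mul_pos (mul_pos hx0 hx0) h14,
        mul_pos (mul_pos (mul_pos hx0 hx0) hx0) h14, sq_nonneg x]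
    · -- n*t < 1/2
      have hxp : x ^ (m + 1) < (1/4 : ℝ) ^ (m + 1) :=
        pow_lt_pow_left₀ hx1 hx0.le (by omega)
      have h1 : t < 2 * (1/4 : ℝ) ^ (m + 1) := by
        have hle : x ^ (m + 1) * (1 - x) ≤ x ^ (m + 1) := by nlinarith
        calc t ≤ 2 * x ^ (m + 1) := by rw [htdef]; nlinarith
          _ < 2 * (1/4 : ℝ) ^ (m + 1) := by linarith
      have hq : ((1:ℝ)/4) ^ (m + 1) * 4 ^ (m + 1) = 1 := by
        rw [← mul_pow]; norm_num
      have hcast : (4:ℝ) * ((m:ℝ) + 2) ≤ 4 ^ (m + 1) := by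
        have := ext_aux_nat m hm
        have h := (Nat.cast_le (α := ℝ)).mpr this
        push_cast at h
        convert h using 2 <;> push_cast <;> ring
      have hp : (0:ℝ) < (1/4 : ℝ) ^ (m + 1) := by positivity
      have hnt : ((m:ℝ) + 2) * t < 1/2 := by
        have hmul := mul_le_mul_of_nonneg_right hcast hp.le
        calc ((m:ℝ) + 2) * t < ((m:ℝ) + 2) * (2 * (1/4:ℝ) ^ (m + 1)) := by
              apply mul_lt_mul_of_pos_left h1 (by positivity)
          _ ≤ 1/2 := by nlinarith [hq, hmul, hp]
      have ht_half : t < 1/2 := by nlinarith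
      have hb : 1 - ((m:ℝ) + 2) * t ≤ (1 - t) ^ (m + 2) := by
        have h := one_add_mul_le_pow (a := -t) (by linarith) (m + 2)
        push_cast at h
        calc 1 - ((m:ℝ) + 2) * t = 1 + ((m:ℝ) + 2) * (-t) := by ring
          _ ≤ (1 + -t) ^ (m + 2) := h
          _ = (1 - t) ^ (m + 2) := by ring_nf
      have hpos : (0:ℝ) < (1 - t) ^ (m + 2) := by
        apply lt_of_lt_of_le _ hb; linarith
      have hmul1 : (1 + t) ^ (m + 2) * (1 - t) ^ (m + 2) ≤ 1 := by
        rw [← mul_pow]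
        have h2 : (1 + t) * (1 - t) = 1 - t ^ 2 := by ring
        rw [h2]
        apply pow_le_one₀ (by nlinarith) (by nlinarith)
      have hlt : (1 + t) ^ (m + 2) * (1 - t) ^ (m + 2) < 2 * (1 - t) ^ (m + 2) :=
        lt_of_le_of_lt hmul1 (by nlinarith)
      exact (mul_lt_mul_iff_of_pos_right hpos).mp hlt
  -- key inequality on G
  have key : (x + (1 - x) * (2 * x ^ (m + 2))) ^ (m + 2) < 2 * x ^ (m + 2) := by
    have hrw : x + (1 - x) * (2 * x ^ (m + 2)) = x * (1 + t) := by
      rw [htdef]; ring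
    rw [hrw, mul_pow]
    have hxn2 : 0 < x ^ (m + 2) := pow_pos hx0 (m + 2)
    nlinarith [mul_lt_mul_of_pos_left hkey2 hxn2]
  -- IVT
  have hb0 : (0:ℝ) ≤ 2 * x ^ (m + 2) := by positivity
  set f : ℝ → ℝ := fun z => (x + (1 - x) * z) ^ (m + 2) - z with hf
  have hcont : ContinuousOn f (Set.Icc 0 (2 * x ^ (m + 2))) := by fun_prop
  have hf0 : f 0 = x ^ (m + 2) := by simp [hf]
  have hfb : f (2 * x ^ (m + 2)) < 0 := by
    simp only [hf]; linarith
  have hmem : (0:ℝ) ∈ Set.Icc (f (2 * x ^ (m + 2))) (f 0) := by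
    constructor
    · exact hfb.le
    · rw [hf0]; positivity
  obtain ⟨c, hc, hfc⟩ := intermediate_value_Icc' hb0 hcont hmem
  have hcS : c ∈ {z : ℝ | 0 ≤ z ∧ (x + (1 - x) * z) ^ (m + 2) = z} := by
    refine ⟨hc.1, ?_⟩
    have : (x + (1 - x) * c) ^ (m + 2) - c = 0 := hfc
    linarith
  have hcne : c < 2 * x ^ (m + 2) := by
    rcases lt_or_eq_of_le hc.2 with h | h
    · exact h
    · exfalso
      have : f c = 0 := hfc
      rw [h] at this
      linarith
  have hbdd : BddBelow {z : ℝ | 0 ≤ z ∧ (x + (1 - x) * z) ^ (m + 2) = z} :=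
    ⟨0, fun z hz => hz.1⟩
  exact lt_of_le_of_lt (csInf_le hbdd hcS) hcne
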